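/- Let k be an algebraically closed field of characteristic 2, write k(x) for the field of rational functions over k, and let k(x²) ⊆ k(x) denote the range of the k-algebra endomorphism of k(x) sending x to x². For a nonzero f ∈ k(x), define T_f : k(x) → k(x) by T_f(q) = q·f′ − f·q′, where ′ denotes the derivative on k(x). Then for every nonzero polynomial f ∈ k[x], the image of T_f equals k(x²), i.e. {q·f′ − f·q′ : q ∈ k(x)} = k(x²). -/

import Mathlib

open Polynomial

section Aux
variable (k : Type*) [Field k]

lemma aux_decomp (g : k[X]) : ∃ A B : k[X], g = expand k 2 A + X * expand k 2 B := by
  have H : ∀ n (g : k[X]), g.natDegree ≤ n → ∃ A B : k[X], g = expand k 2 A + X * expand k 2 B := by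
    intro n
    induction n with
    | zero =>
      intro g hg
      refine ⟨C (g.coeff 0), 0, ?_⟩
      rw [Polynomial.expand_C, map_zero, mul_zero, add_zero]
      exact Polynomial.eq_C_of_natDegree_le_zero hg
    | succ n ih =>
      intro g hg
      obtain ⟨A, B, hAB⟩ := ih g.divX (by
        rw [Polynomial.natDegree_divX_eq_natDegree_tsub_one]; omega)
      refine ⟨C (g.coeff 0) + X * B, A, ?_⟩
      have := Polynomial.X_mul_divX_add g
      rw [map_add, map_mul, Polynomial.expand_X]
      rw [← this, hAB]
      simp [Polynomial.expand_C]
      ring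
  exact H g.natDegree g le_rfl

lemma aux_sq [CharP k 2] (p : k[X]) : ∃ g : k[X], p ^ 2 = expand k 2 g := by
  induction p using Polynomial.induction_on with
  | C a => exact ⟨C (a ^ 2), by simp [Polynomial.expand_C]⟩
  | add p q hp hq =>
    obtain ⟨g1, h1⟩ := hp; obtain ⟨g2, h2⟩ := hq
    refine ⟨g1 + g2, ?_⟩
    rw [add_pow_char, h1, h2, map_add]
  | monomial n a _ =>
    refine ⟨C (a ^ 2) * X ^ (n + 1), ?_⟩
    have : (expand k 2) (C (a ^ 2) * X ^ (n + 1)) = C (a ^ 2) * (X ^ (n + 1)) ^ 2 := by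
      simp [Polynomial.expand_C, Polynomial.expand_X, ← pow_mul, mul_comm]
    rw [this, Polynomial.C_pow, mul_pow]

end Aux

theorem char_two_image_of_Tf
    (k : Type*) [Field k] [IsAlgClosed k] [CharP k 2]
    (φ : RatFunc k →ₐ[k] RatFunc k) (hφ : φ RatFunc.X = RatFunc.X ^ 2)
    (D : Derivation k (RatFunc k) (RatFunc k)) (hD : D RatFunc.X = 1)
    (f : k[X]) (hf : f ≠ 0) :
    {y : RatFunc k | ∃ q : RatFunc k,
        y = q * D (algebraMap k[X] (RatFunc k) f) - algebraMap k[X] (RatFunc k) f * D q}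
      = Set.range φ := by
  have hchar : CharP (RatFunc k) 2 :=
    charP_of_injective_algebraMap (algebraMap k (RatFunc k)).injective 2
  -- L1
  have L1 : ∀ p : k[X], φ (algebraMap k[X] (RatFunc k) p) = algebraMap k[X] (RatFunc k) (expand k 2 p) := by
    have h : φ.comp (IsScalarTower.toAlgHom k k[X] (RatFunc k)) =
        (IsScalarTower.toAlgHom k k[X] (RatFunc k)).comp (expand k 2) := by
      apply Polynomial.algHom_ext
      simp [hφ, Polynomial.expand_X, RatFunc.algebraMap_X]
    intro p
    exact DFunLike.congr_fun h p
  -- D kills the range of φ, first on polynomials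
  have Lpoly : ∀ p : k[X], D (φ (algebraMap k[X] (RatFunc k) p)) = 0 := by
    intro p
    induction p using Polynomial.induction_on with
    | C a =>
      rw [show algebraMap k[X] (RatFunc k) (C a) = algebraMap k (RatFunc k) a from RatFunc.algebraMap_C a]
      rw [AlgHom.commutes]
      exact D.map_algebraMap a
    | add p q hp hq => simp only [map_add, hp, hq, add_zero]
    | monomial n a _ =>
      rw [map_mul, map_mul, map_pow, map_pow]
      rw [show algebraMap k[X] (RatFunc k) X = RatFunc.X from RatFunc.algebraMap_X, hφ, ← pow_mul]
      rw [Derivation.leibniz, Derivation.leibniz_pow]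
      have h2 : ((2 * (n + 1) : ℕ) : RatFunc k) = 0 := by
        rw [Nat.cast_mul, CharP.cast_eq_zero (RatFunc k) 2, zero_mul]
      have : D (φ (algebraMap k[X] (RatFunc k) (C a))) = 0 := by
        rw [show algebraMap k[X] (RatFunc k) (C a) = algebraMap k (RatFunc k) a from RatFunc.algebraMap_C a,
          AlgHom.commutes]
        exact D.map_algebraMap a
      rw [this, hD]
      simp only [smul_eq_mul, nsmul_eq_mul, mul_one, h2]
      ring
  have L3 : ∀ r : RatFunc k, D (φ r) = 0 := by
    intro r
    induction r using RatFunc.induction_on with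
    | f p q hq =>
      rw [map_div₀, Derivation.leibniz_div_const _ _ _ (Lpoly q), Lpoly p, smul_zero]
  -- decomposition of an arbitrary rational function
  have L4 : ∀ r : RatFunc k, ∃ u v : RatFunc k, r = φ u + RatFunc.X * φ v := by
    intro r
    induction r using RatFunc.induction_on with
    | f p q hq =>
      obtain ⟨A, B, hAB⟩ := aux_decomp k (p * q)
      obtain ⟨g, hg⟩ := aux_sq k q
      have hαg : φ (algebraMap k[X] (RatFunc k) g) = algebraMap k[X] (RatFunc k) q ^ 2 := by rw [L1, ← hg, map_pow]
      have hαq : algebraMap k[X] (RatFunc k) q ≠ 0 := RatFunc.algebraMap_ne_zero hq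
      have hαg0 : φ (algebraMap k[X] (RatFunc k) g) ≠ 0 := by rw [hαg]; exact pow_ne_zero _ hαq
      refine ⟨algebraMap k[X] (RatFunc k) A / algebraMap k[X] (RatFunc k) g, algebraMap k[X] (RatFunc k) B / algebraMap k[X] (RatFunc k) g, ?_⟩
      rw [map_div₀, map_div₀, L1 A, L1 B]
      have key : algebraMap k[X] (RatFunc k) (p * q) = algebraMap k[X] (RatFunc k) (expand k 2 A) + RatFunc.X * algebraMap k[X] (RatFunc k) (expand k 2 B) := by
        rw [hAB, map_add, map_mul, show algebraMap k[X] (RatFunc k) X = RatFunc.X from RatFunc.algebraMap_X]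
      have hXmul : RatFunc.X * (algebraMap k[X] (RatFunc k) (expand k 2 B) / φ (algebraMap k[X] (RatFunc k) g)) =
          RatFunc.X * algebraMap k[X] (RatFunc k) (expand k 2 B) / φ (algebraMap k[X] (RatFunc k) g) := by ring
      rw [hXmul, ← add_div, ← key, hαg, map_mul]
      field_simp
  -- compute D on decomposed elements
  have L5 : ∀ u v : RatFunc k, D (φ u + RatFunc.X * φ v) = φ v := by
    intro u v
    rw [map_add, L3, Derivation.leibniz, L3, hD, smul_eq_mul, smul_eq_mul]
    ring
  -- decompose f
  obtain ⟨A, B, hAB⟩ := aux_decomp k f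
  have hF : algebraMap k[X] (RatFunc k) f = φ (algebraMap k[X] (RatFunc k) A) + RatFunc.X * φ (algebraMap k[X] (RatFunc k) B) := by
    rw [hAB, map_add, map_mul, show algebraMap k[X] (RatFunc k) X = RatFunc.X from RatFunc.algebraMap_X, L1, L1]
  have hDF : D (algebraMap k[X] (RatFunc k) f) = φ (algebraMap k[X] (RatFunc k) B) := by rw [hF]; exact L5 (algebraMap k[X] (RatFunc k) A) (algebraMap k[X] (RatFunc k) B)
  ext y
  simp only [Set.mem_setOf_eq, Set.mem_range]
  constructor
  · rintro ⟨q, rfl⟩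
    obtain ⟨u, v, rfl⟩ := L4 q
    refine ⟨u * algebraMap k[X] (RatFunc k) B - algebraMap k[X] (RatFunc k) A * v, ?_⟩
    rw [map_sub, map_mul, map_mul, hDF, L5, hF]
    ring
  · rintro ⟨r, rfl⟩
    by_cases hB : B = 0
    · have hA : A ≠ 0 := by
        intro hA0
        apply hf
        rw [hAB, hA0, hB]
        simp
      have hαA : φ (algebraMap k[X] (RatFunc k) A) ≠ 0 := by
        rw [_root_.map_ne_zero]
        exact RatFunc.algebraMap_ne_zero hA
      refine ⟨RatFunc.X * φ (-r / algebraMap k[X] (RatFunc k) A), ?_⟩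
      have hq : RatFunc.X * φ (-r / algebraMap k[X] (RatFunc k) A) = φ 0 + RatFunc.X * φ (-r / algebraMap k[X] (RatFunc k) A) := by
        rw [map_zero, zero_add]
      rw [hDF, hq, L5, hF, hB]
      simp only [map_zero, mul_zero, zero_add, add_zero, zero_sub, map_div₀, map_neg]
      field_simp
    · have hαB : φ (algebraMap k[X] (RatFunc k) B) ≠ 0 := by
        rw [_root_.map_ne_zero]
        exact RatFunc.algebraMap_ne_zero hB
      refine ⟨φ (r / algebraMap k[X] (RatFunc k) B), ?_⟩
      rw [hDF, L3, mul_zero, sub_zero, map_div₀]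
      field_simp
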